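/- Let Ω ⊆ ℝ^N be a nonempty open set and let E ⊆ ℝ^N be a measurable set such that 𝒥^λ_{s₀}(E;Ω) < ∞ for some s₀ ∈ (0,1). Then lim_{s→0⁺} s·𝒥^λ_s(E;Ω) = 0. -/

import Mathlib

open MeasureTheory Real Set Filter

/-- The measure λ with density $(2π)^{-N/2} e^{-|x|^2/4}$ w.r.t. Lebesgue measure. -/
noncomputable def lambdaMeasure (N : ℕ) : Measure (EuclideanSpace ℝ (Fin N)) :=
  volume.withDensity fun x => ENNReal.ofReal ((2 * π) ^ (-(N : ℝ) / 2) * Real.exp (-‖x‖ ^ 2 / 4))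

/-- The interaction $L^λ_s(A,B) = ∫_A ∫_B |x-y|^{-(N+s)} dλ(y) dλ(x)$. -/
noncomputable def Llambda (N : ℕ) (s : ℝ) (A B : Set (EuclideanSpace ℝ (Fin N))) : ENNReal :=
  ∫⁻ x in A, ∫⁻ y in B, ENNReal.ofReal (‖x - y‖ ^ (-((N : ℝ) + s)))
    ∂(lambdaMeasure N) ∂(lambdaMeasure N)

/-- The Gaussian fractional $s$-perimeter of De Rosa–La Manna. -/
noncomputable def Jlambda (N : ℕ) (s : ℝ) (E Ω : Set (EuclideanSpace ℝ (Fin N))) : ENNReal :=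
  Llambda N s (E ∩ Ω) (Eᶜ ∩ Ω) + Llambda N s (E ∩ Ω) (Eᶜ ∩ Ωᶜ) + Llambda N s (E ∩ Ωᶜ) (Eᶜ ∩ Ω)

lemma gauss_integrable (N : ℕ) :
    Integrable (fun x : EuclideanSpace ℝ (Fin N) =>
      (2 * π) ^ (-(N : ℝ) / 2) * Real.exp (-‖x‖ ^ 2 / 4)) := by
  apply Integrable.const_mul
  have h : Integrable (fun v : EuclideanSpace ℝ (Fin N) =>
      Complex.exp (-(1/4 : ℂ) * (‖v‖ : ℂ) ^ 2 + 0 * (inner ℝ (0 : EuclideanSpace ℝ (Fin N)) v : ℝ))) :=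
    GaussianFourier.integrable_cexp_neg_mul_sq_norm_add (by norm_num) 0 0
  have h2 := h.norm
  apply h2.congr
  filter_upwards with v
  rw [zero_mul, add_zero]
  have : (-(1/4 : ℂ) * (‖v‖ : ℂ) ^ 2) = ((-‖v‖^2/4 : ℝ) : ℂ) := by push_cast; ring
  rw [this, ← Complex.ofReal_exp, Complex.norm_real]
  rw [Real.norm_eq_abs, abs_of_pos (Real.exp_pos _)]

lemma lambda_univ_lt_top (N : ℕ) : lambdaMeasure N Set.univ < ⊤ := by
  rw [lambdaMeasure, withDensity_apply _ MeasurableSet.univ, Measure.restrict_univ]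
  exact (gauss_integrable N).lintegral_lt_top

lemma kernel_bound (N : ℕ) {s s₀ : ℝ} (hs : 0 < s) (hss : s ≤ s₀) (r : ℝ) (hr : 0 ≤ r) :
    ENNReal.ofReal (r ^ (-((N : ℝ) + s))) ≤ ENNReal.ofReal (r ^ (-((N : ℝ) + s₀))) + 1 := by
  rcases eq_or_lt_of_le hr with h0 | h0
  · have hne : ((N : ℝ) + s) ≠ 0 := by positivity
    rw [← h0, Real.zero_rpow (neg_ne_zero.2 hne)]
    simp
  · rcases le_or_gt r 1 with h1 | h1
    · refine le_trans (ENNReal.ofReal_le_ofReal ?_) le_self_add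
      exact Real.rpow_le_rpow_of_exponent_ge h0 h1 (by linarith)
    · refine le_trans ?_ le_add_self
      have : r ^ (-((N : ℝ) + s)) ≤ r ^ (0 : ℝ) :=
        Real.rpow_le_rpow_of_exponent_le h1.le (neg_nonpos.2 (by positivity))
      rw [Real.rpow_zero] at this
      simpa using ENNReal.ofReal_le_ofReal this

lemma L_bound (N : ℕ) {s s₀ : ℝ} (hs : 0 < s) (hss : s ≤ s₀)
    (A B : Set (EuclideanSpace ℝ (Fin N))) :
    Llambda N s A B ≤ Llambda N s₀ A B +
      lambdaMeasure N Set.univ * lambdaMeasure N Set.univ := by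
  have key : ∀ x, (∫⁻ y in B, ENNReal.ofReal (‖x - y‖ ^ (-((N : ℝ) + s)))
      ∂(lambdaMeasure N)) ≤
      (∫⁻ y in B, ENNReal.ofReal (‖x - y‖ ^ (-((N : ℝ) + s₀))) ∂(lambdaMeasure N)) +
      lambdaMeasure N Set.univ := by
    intro x
    calc (∫⁻ y in B, ENNReal.ofReal (‖x - y‖ ^ (-((N : ℝ) + s))) ∂(lambdaMeasure N))
        ≤ ∫⁻ y in B, (ENNReal.ofReal (‖x - y‖ ^ (-((N : ℝ) + s₀))) + 1) ∂(lambdaMeasure N) :=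
          lintegral_mono fun y => kernel_bound N hs hss _ (norm_nonneg _)
      _ = (∫⁻ y in B, ENNReal.ofReal (‖x - y‖ ^ (-((N : ℝ) + s₀))) ∂(lambdaMeasure N))
            + ∫⁻ _ in B, 1 ∂(lambdaMeasure N) := lintegral_add_right _ measurable_const
      _ ≤ _ := by
          gcongr
          rw [lintegral_one, Measure.restrict_apply_univ]
          exact measure_mono (Set.subset_univ _)
  calc Llambda N s A B
      ≤ ∫⁻ x in A, ((∫⁻ y in B, ENNReal.ofReal (‖x - y‖ ^ (-((N : ℝ) + s₀)))
          ∂(lambdaMeasure N)) + lambdaMeasure N Set.univ) ∂(lambdaMeasure N) :=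
        lintegral_mono key
    _ = Llambda N s₀ A B + ∫⁻ _ in A, lambdaMeasure N Set.univ ∂(lambdaMeasure N) :=
        lintegral_add_right _ measurable_const
    _ ≤ _ := by
        gcongr
        rw [MeasureTheory.lintegral_const, Measure.restrict_apply_univ]
        exact mul_le_mul_right (measure_mono (Set.subset_univ _)) _

/-- if $𝒥^λ_{s_0}(E;Ω)<∞$ for some $s_0∈(0,1)$ then
$\lim_{s→0^+} s 𝒥^λ_s(E;Ω)=0$. -/
theorem stmt_13 (N : ℕ) (Ω E : Set (EuclideanSpace ℝ (Fin N)))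
    (hΩopen : IsOpen Ω) (hΩne : Ω.Nonempty) (hE : MeasurableSet E)
    (s₀ : ℝ) (hs₀ : s₀ ∈ Set.Ioo (0 : ℝ) 1) (hfin : Jlambda N s₀ E Ω < ⊤) :
    Filter.Tendsto (fun s : ℝ => ENNReal.ofReal s * Jlambda N s E Ω)
      (nhdsWithin 0 (Set.Ioi 0)) (nhds 0) := by
  set C : ENNReal := Jlambda N s₀ E Ω +
    3 * (lambdaMeasure N Set.univ * lambdaMeasure N Set.univ) with hC
  have hCfin : C ≠ ⊤ := by
    have := lambda_univ_lt_top N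
    refine ENNReal.add_ne_top.2 ⟨hfin.ne, ?_⟩
    exact ENNReal.mul_ne_top (by norm_num) (ENNReal.mul_ne_top this.ne this.ne)
  have hJ : ∀ s : ℝ, 0 < s → s ≤ s₀ → Jlambda N s E Ω ≤ C := by
    intro s hs hss
    have h1 := L_bound N hs hss (E ∩ Ω) (Eᶜ ∩ Ω)
    have h2 := L_bound N hs hss (E ∩ Ω) (Eᶜ ∩ Ωᶜ)
    have h3 := L_bound N hs hss (E ∩ Ωᶜ) (Eᶜ ∩ Ω)
    rw [hC, Jlambda, Jlambda]
    calc _ ≤ _ := add_le_add (add_le_add h1 h2) h3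
      _ = _ := by ring
  have hlim : Filter.Tendsto (fun s : ℝ => ENNReal.ofReal s * C)
      (nhdsWithin 0 (Set.Ioi 0)) (nhds 0) := by
    have h0 : Filter.Tendsto (fun s : ℝ => ENNReal.ofReal s)
        (nhdsWithin 0 (Set.Ioi 0)) (nhds 0) := by
      have := (ENNReal.continuous_ofReal.tendsto 0).comp
        (Filter.tendsto_id.mono_left (nhdsWithin_le_nhds : nhdsWithin (0:ℝ) (Set.Ioi 0) ≤ _))
      simpa [Function.comp] using this
    simpa using ENNReal.Tendsto.mul_const h0 (Or.inr hCfin)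
  apply tendsto_of_tendsto_of_tendsto_of_le_of_le' tendsto_const_nhds hlim
  · filter_upwards with s using zero_le
  · filter_upwards [self_mem_nhdsWithin,
      mem_nhdsWithin_of_mem_nhds (Iio_mem_nhds hs₀.1)] with s hs hs'
    exact mul_le_mul_right (hJ s hs (le_of_lt hs')) _
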